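/- Let n ≥ 2 and let π be the rotation permutation of {1,…,n} given by π(a) ≡ a + q (mod n) for an integer q with 0 < q ≤ n/2. Then any routing of π on the cycle C_n requires at least n − q rounds; that is, rt(C_n, π) ≥ n − q. -/

import Mathlib

/-- One round of routing on the cycle `C_n`.  The configuration `σ` sends each
pebble to its current vertex.  A set `M` of vertices encodes the matching
`{(i, i+1) : i ∈ M}`; the matching condition is that no two chosen edges share
a vertex.  The pebbles on the endpoints of each chosen edge are swapped. -/
def CycleStep (n : ℕ) (σ τ : Equiv.Perm (ZMod n)) : Prop :=
  ∃ M : Finset (ZMod n), (∀ i ∈ M, i + 1 ∉ M) ∧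
    ∀ p : ZMod n,
      τ p = if σ p ∈ M then σ p + 1 else if σ p - 1 ∈ M then σ p - 1 else σ p

/-- `RoutesIn n π k` : starting from the configuration where pebble `p` sits at
vertex `π p`, `k` rounds of swaps along matchings of `C_n` bring every pebble
to its destination (pebble `p` to vertex `p`). -/
def RoutesIn (n : ℕ) (π : Equiv.Perm (ZMod n)) (k : ℕ) : Prop :=
  ∃ f : ℕ → Equiv.Perm (ZMod n), f 0 = π ∧ f k = 1 ∧
    ∀ t < k, CycleStep n (f t) (f (t + 1))

/-- The routing number `rt(C_n, π)`: the minimum number of rounds needed to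
route the permutation `π` on the cycle `C_n`. -/
noncomputable def rt (n : ℕ) (π : Equiv.Perm (ZMod n)) : ℕ :=
  sInf {k | RoutesIn n π k}


def AdjSwaps (n : ℕ) : Set (Equiv.Perm (ZMod n)) := {σ | ∃ i : ZMod n, σ = Equiv.swap i (i + 1)}

lemma natCast_ne_zero_zmod {n j : ℕ} (hj0 : 0 < j) (hjn : j < n) : ((j : ℕ) : ZMod n) ≠ 0 := by
  intro h
  rw [ZMod.natCast_eq_zero_iff] at h
  exact absurd (Nat.le_of_dvd hj0 h) (by omega)

lemma swap_mem_adj (n : ℕ) [NeZero n] (a b : ZMod n) (hab : a ≠ b) :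
    Equiv.swap a b ∈ Submonoid.closure (AdjSwaps n) := by
  have key : ∀ j : ℕ, 0 < j → j < n → Equiv.swap a (a + j) ∈ Submonoid.closure (AdjSwaps n) := by
    intro j
    induction j with
    | zero => intro h; omega
    | succ j ih =>
      intro _ hjn
      rcases Nat.eq_zero_or_pos j with hj0 | hj0
      · subst hj0
        exact Submonoid.subset_closure ⟨a, by norm_num⟩
      · have hj : Equiv.swap a (a + j) ∈ Submonoid.closure (AdjSwaps n) :=
          ih hj0 (by omega)
        have hc : Equiv.swap (a + j) (a + j + 1) ∈ Submonoid.closure (AdjSwaps n) :=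
          Submonoid.subset_closure ⟨a + j, rfl⟩
        set c := Equiv.swap (a + j) (a + j + 1) with hcdef
        have hne1 : a ≠ a + (j : ZMod n) := by
          intro h
          exact natCast_ne_zero_zmod (n := n) hj0 (by omega) (by linear_combination -h)
        have hne2 : a ≠ a + (j : ZMod n) + 1 := by
          intro h
          exact natCast_ne_zero_zmod (n := n) (j := j + 1) (by omega) hjn
            (by push_cast; linear_combination -h)
        have hca : c a = a := Equiv.swap_apply_of_ne_of_ne hne1 hne2
        have hcj : c (a + j) = a + j + 1 := Equiv.swap_apply_left _ _
        have : Equiv.swap a (a + ((j : ℕ) + 1 : ZMod n)) = c * Equiv.swap a (a + j) * c⁻¹ := by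
          rw [← Equiv.swap_apply_apply c a (a + j), hca, hcj, add_assoc]
        rw [show ((j + 1 : ℕ) : ZMod n) = ((j : ℕ) + 1 : ZMod n) by push_cast; ring, this,
          Equiv.swap_inv]
        exact mul_mem (mul_mem hc hj) hc
  have hval : a + (((b - a).val : ℕ) : ZMod n) = b := by
    rw [ZMod.natCast_val, ZMod.cast_id]; ring
  have h0 : 0 < (b - a).val := by
    rcases Nat.eq_zero_or_pos (b - a).val with h | h
    · exfalso; apply hab; have := (ZMod.val_eq_zero (b - a)).1 h; linear_combination -this
    · exact h
  have h1 : (b - a).val < n := ZMod.val_lt _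
  have := key _ h0 h1
  rwa [hval] at this

lemma adj_mclosure_top (n : ℕ) [NeZero n] :
    Submonoid.closure (AdjSwaps n) = ⊤ := by
  rw [eq_top_iff, ← Equiv.Perm.mclosure_isSwap, Submonoid.closure_le]
  rintro σ ⟨a, b, hab, rfl⟩
  exact swap_mem_adj n a b hab

lemma cycleStep_swap (n : ℕ) (hn : 2 ≤ n) (i : ZMod n) (σ : Equiv.Perm (ZMod n)) :
    CycleStep n σ (Equiv.swap i (i + 1) * σ) := by
  haveI : NeZero n := ⟨by omega⟩
  have hone : (1 : ZMod n) ≠ 0 := by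
    have := natCast_ne_zero_zmod (n := n) (j := 1) one_pos (by omega)
    simpa using this
  have hii : i + 1 ≠ i := by
    intro h; exact hone (by linear_combination h)
  refine ⟨{i}, by simpa using hii, fun p => ?_⟩
  simp only [Finset.mem_singleton, Equiv.Perm.mul_apply, sub_eq_iff_eq_add]
  by_cases h1 : σ p = i
  · simp [h1, hii]
  · by_cases h2 : σ p = i + 1
    · rw [if_neg h1, if_pos h2, h2, Equiv.swap_apply_right]; ring
    · rw [if_neg h1, if_neg h2, Equiv.swap_apply_of_ne_of_ne h1 h2]

lemma routes_exists (n : ℕ) (hn : 2 ≤ n) (π : Equiv.Perm (ZMod n)) :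
    ∃ k, RoutesIn n π k := by
  haveI : NeZero n := ⟨by omega⟩
  have hmem : π⁻¹ ∈ Submonoid.closure (AdjSwaps n) := by
    rw [adj_mclosure_top]; trivial
  obtain ⟨l, hl, hlp⟩ := Submonoid.exists_list_of_mem_closure hmem
  refine ⟨l.length, fun t => (l.drop (l.length - t)).prod * π, by simp, by simp [hlp], ?_⟩
  intro t ht
  have hidx : l.length - (t + 1) < l.length := by omega
  have harith : l.length - t = (l.length - (t + 1)) + 1 := by omega
  have hdrop : l.drop (l.length - (t + 1)) =
      l.get ⟨l.length - (t + 1), hidx⟩ :: l.drop (l.length - t) := by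
    rw [List.drop_eq_getElem_cons hidx, harith]
    rfl
  obtain ⟨i, hi⟩ := hl (l.get ⟨l.length - (t + 1), hidx⟩) (List.get_mem _ _)
  simp only [hdrop, List.prod_cons, hi, mul_assoc]
  exact cycleStep_swap n hn i _


lemma routes_lower (n q : ℕ) (hn : 2 ≤ n) (hq : 0 < q) (hq2 : 2 * q ≤ n)
    (k : ℕ) (h : RoutesIn n (Equiv.addRight (q : ZMod n)) k) : n - q ≤ k := by
  haveI : NeZero n := ⟨by omega⟩
  obtain ⟨f, hf0, hfk, hstep⟩ := h
  classical
  -- choose matchings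
  let M : ℕ → Finset (ZMod n) := fun t =>
    if ht : t < k then (hstep t ht).choose else ∅
  have hM : ∀ t (ht : t < k), (∀ i ∈ M t, i + 1 ∉ M t) ∧
      ∀ p : ZMod n, f (t+1) p = if f t p ∈ M t then f t p + 1
        else if f t p - 1 ∈ M t then f t p - 1 else f t p := by
    intro t ht
    have := (hstep t ht).choose_spec
    simpa only [M, dif_pos ht] using this
  -- the signed move of pebble p at round t
  let d : ZMod n → ℕ → ℤ := fun p t =>
    if f t p ∈ M t then 1 else if f t p - 1 ∈ M t then -1 else 0
  have habs : ∀ p t, |d p t| ≤ 1 := by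
    intro p t
    simp only [d]
    split_ifs <;> simp
  have hA : ∀ t, t < k → ∀ p : ZMod n, f (t+1) p = f t p + ((d p t : ℤ) : ZMod n) := by
    intro t ht p
    rw [(hM t ht).2 p]
    simp only [d]
    split_ifs <;> push_cast <;> ring
  have hB : ∀ t, t < k → ∑ p : ZMod n, d p t = 0 := by
    intro t ht
    have hsum : ∑ p : ZMod n, d p t =
        ∑ v : ZMod n, (if v ∈ M t then (1:ℤ) else if v - 1 ∈ M t then -1 else 0) :=
      Equiv.sum_comp (f t) (fun v => if v ∈ M t then (1:ℤ) else if v - 1 ∈ M t then -1 else 0)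
    rw [hsum]
    have hpt : ∀ v : ZMod n, (if v ∈ M t then (1:ℤ) else if v - 1 ∈ M t then -1 else 0)
        = (if v ∈ M t then (1:ℤ) else 0) - (if v - 1 ∈ M t then (1:ℤ) else 0) := by
      intro v
      by_cases h1 : v ∈ M t
      · have h2 : v - 1 ∉ M t := by
          intro h2
          have := (hM t ht).1 _ h2
          rw [sub_add_cancel] at this
          exact this h1
        simp [h1, h2]
      · by_cases h2 : v - 1 ∈ M t <;> simp [h1, h2]
    rw [Finset.sum_congr rfl (fun v _ => hpt v), Finset.sum_sub_distrib]
    have : ∑ v : ZMod n, (if v - 1 ∈ M t then (1:ℤ) else 0)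
        = ∑ v : ZMod n, (if v ∈ M t then (1:ℤ) else 0) := by
      exact Equiv.sum_comp (Equiv.subRight (1 : ZMod n)) (fun w => if w ∈ M t then (1:ℤ) else 0)
    rw [this, sub_self]
  -- total displacement
  set D : ZMod n → ℤ := fun p => ∑ t ∈ Finset.range k, d p t with hD
  have hDabs : ∀ p, |D p| ≤ (k : ℤ) := by
    intro p
    calc |D p| ≤ ∑ t ∈ Finset.range k, |d p t| := Finset.abs_sum_le_sum_abs _ _
    _ ≤ ∑ t ∈ Finset.range k, 1 := Finset.sum_le_sum (fun t _ => habs p t)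
    _ = k := by simp
  have htel : ∀ t, t ≤ k → ∀ p : ZMod n,
      f t p = f 0 p + ((∑ s ∈ Finset.range t, d p s : ℤ) : ZMod n) := by
    intro t
    induction t with
    | zero => intro _ p; simp
    | succ t ih =>
      intro ht p
      rw [hA t (by omega) p, ih (by omega) p, Finset.sum_range_succ]
      push_cast
      ring
  have hDcast : ∀ p : ZMod n, ((D p : ℤ) : ZMod n) = -(q : ZMod n) := by
    intro p
    have := htel k le_rfl p
    rw [hfk, hf0] at this
    simp only [Equiv.Perm.one_apply, Equiv.coe_addRight] at this
    rw [hD]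
    linear_combination -this
  have hDsum : ∑ p : ZMod n, D p = 0 := by
    rw [hD]
    rw [Finset.sum_comm]
    rw [Finset.sum_congr rfl (fun t ht => hB t (Finset.mem_range.mp ht))]
    simp
  have hqne : ((q : ℕ) : ZMod n) ≠ 0 := by
    intro h
    rw [ZMod.natCast_eq_zero_iff] at h
    exact absurd (Nat.le_of_dvd hq h) (by omega)
  have hDne : ∀ p, D p ≠ 0 := by
    intro p h
    apply hqne
    have := hDcast p
    rw [h] at this
    simpa using this.symm
  have hpos : ∃ p, 0 < D p := by
    by_contra hcon
    push_neg at hcon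
    have hneg : ∀ p ∈ (Finset.univ : Finset (ZMod n)), D p < 0 :=
      fun p _ => lt_of_le_of_ne (hcon p) (hDne p)
    have : ∑ p : ZMod n, D p < 0 := Finset.sum_neg hneg Finset.univ_nonempty
    omega
  obtain ⟨p, hp⟩ := hpos
  have hdvd : (n : ℤ) ∣ D p + q := by
    rw [← ZMod.intCast_zmod_eq_zero_iff_dvd]
    push_cast
    rw [hDcast p]
    ring
  have hle : (n : ℤ) ≤ D p + q := Int.le_of_dvd (by positivity) hdvd
  have := hDabs p
  have habs' : D p ≤ (k : ℤ) := le_trans (le_abs_self _) this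
  omega

/-- Lower bound of the Rotation Lemma: for the rotation `π(a) = a + q` on `C_n`
with `0 < q ≤ n/2`, any routing needs at least `n − q` rounds, i.e.
`rt(C_n, π) ≥ n − q`. -/
theorem stmt11 (n q : ℕ) (hn : 2 ≤ n) (hq : 0 < q) (hq2 : 2 * q ≤ n) :
    (∀ k : ℕ, RoutesIn n (Equiv.addRight (q : ZMod n)) k → n - q ≤ k) ∧
    n - q ≤ rt n (Equiv.addRight (q : ZMod n)) := by
  haveI : NeZero n := ⟨by omega⟩
  constructor
  · exact fun k h => routes_lower n q hn hq hq2 k h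
  · obtain ⟨k0, hk0⟩ := routes_exists n hn (Equiv.addRight (q : ZMod n))
    have hne : {k | RoutesIn n (Equiv.addRight (q : ZMod n)) k}.Nonempty := ⟨k0, hk0⟩
    exact routes_lower n q hn hq hq2 _ (Nat.sInf_mem hne)
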